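/- Let G be a finite simple graph on n ≥ 1 vertices with minimum degree δ. Then κ(G) = min over integers s with 1 ≤ s ≤ n − δ of (min over vertex sets S with |S| = s of |N(S)|); equivalently, κ(G) = min{|N(S)| : S ⊆ V(G), 1 ≤ |S| ≤ n − δ}. -/

import Mathlib

namespace SimpleGraph

variable {V : Type*}

/-- The vertex connectivity `κ(G)`: the minimum size of a vertex set `A` whose deletion
leaves a graph that is disconnected or has at most one vertex. -/
noncomputable def vertConn [Fintype V] [DecidableEq V] (G : SimpleGraph V) : ℕ :=
  sInf {k | ∃ A : Finset V, A.card = k ∧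
    ((Aᶜ).card ≤ 1 ∨ ¬ (G.induce ((↑A : Set V)ᶜ)).Connected)}

/-- The external neighborhood `N(S)` of a vertex set `S`: the vertices outside `S`
having a neighbor in `S`. -/
def extNbhd [Fintype V] [DecidableEq V] (G : SimpleGraph V) [DecidableRel G.Adj]
    (S : Finset V) : Finset V :=
  Finset.univ.filter fun v => v ∉ S ∧ ∃ u ∈ S, G.Adj u v

section Aux

variable [Fintype V] [DecidableEq V] (G : SimpleGraph V)

/-- If a predicate is closed under adjacency within `s`, it is preserved by reachability
in the induced graph. -/
lemma aux_reach_closed {s : Set V} (P : V → Prop)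
    (hP : ∀ x y, x ∈ s → y ∈ s → G.Adj x y → P x → P y) :
    ∀ {a b : s}, (G.induce s).Reachable a b → P ↑a → P ↑b := by
  intro a b h
  obtain ⟨p⟩ := h
  induction p with
  | nil => exact id
  | @cons u v w hadj p ih =>
    intro hpu
    exact ih (hP _ _ u.2 v.2 hadj hpu)

lemma aux_not_connected {s : Set V} (P : V → Prop)
    (hP : ∀ x y, x ∈ s → y ∈ s → G.Adj x y → P x → P y)
    {a b : V} (ha : a ∈ s) (hb : b ∈ s) (hPa : P a) (hPb : ¬ P b) :
    ¬ (G.induce s).Connected := by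
  intro hc
  exact hPb (aux_reach_closed G P hP (hc.preconnected ⟨a, ha⟩ ⟨b, hb⟩) hPa)

lemma aux_vertConn_le (k : ℕ) (A : Finset V) (hA : A.card = k)
    (h : (Aᶜ).card ≤ 1 ∨ ¬ (G.induce ((↑A : Set V)ᶜ)).Connected) :
    G.vertConn ≤ k :=
  Nat.sInf_le ⟨A, hA, h⟩

lemma aux_vertConn_le_minDegree [Nonempty V] [DecidableRel G.Adj] :
    G.vertConn ≤ G.minDegree := by
  obtain ⟨v, hv⟩ := G.exists_minimal_degree_vertex
  apply aux_vertConn_le G _ (G.neighborFinset v) (by rw [hv, card_neighborFinset_eq_degree])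
  by_cases h1 : ((G.neighborFinset v)ᶜ).card ≤ 1
  · exact Or.inl h1
  · right
    have hv' : v ∈ (G.neighborFinset v)ᶜ := by simp
    obtain ⟨w, hw, hwv⟩ :=
      Finset.exists_mem_ne (s := (G.neighborFinset v)ᶜ) (by omega) v
    refine aux_not_connected G (· = v) ?_ (a := v) (b := w) (by simpa using hv')
      (by simpa using hw) rfl hwv
    intro x y hx hy hadj hxv
    refine absurd (?_ : y ∈ G.neighborFinset v) (by simpa using hy)
    rw [SimpleGraph.mem_neighborFinset]
    rwa [hxv] at hadj

lemma aux_vertConn_le_extNbhd [Nonempty V] [DecidableRel G.Adj] (S : Finset V)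
    (h1 : 1 ≤ S.card) (h2 : S.card ≤ Fintype.card V - G.minDegree) :
    G.vertConn ≤ (G.extNbhd S).card := by
  by_cases hfull : ∀ v : V, v ∈ S ∨ v ∈ G.extNbhd S
  · -- `S ∪ N(S) = V`, so `|N(S)| ≥ δ ≥ κ`.
    have hdisj : Disjoint S (G.extNbhd S) := by
      rw [Finset.disjoint_left]
      intro x hx hx'
      exact (Finset.mem_filter.mp hx').2.1 hx
    have hcard : S.card + (G.extNbhd S).card = Fintype.card V := by
      rw [← Finset.card_union_of_disjoint hdisj, ← Finset.card_univ]
      congr 1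
      exact Finset.eq_univ_iff_forall.mpr (fun v => Finset.mem_union.mpr (hfull v))
    obtain ⟨v, hv⟩ := G.exists_minimal_degree_vertex
    have hδ : G.minDegree < Fintype.card V := hv ▸ G.degree_lt_card_verts v
    have : G.minDegree ≤ (G.extNbhd S).card := by omega
    exact le_trans (aux_vertConn_le_minDegree G) this
  · push_neg at hfull
    obtain ⟨w, hwS, hwN⟩ := hfull
    obtain ⟨u, hu⟩ := Finset.card_pos.mp h1
    apply aux_vertConn_le G _ (G.extNbhd S) rfl
    right
    have huA : u ∉ G.extNbhd S := fun h => (Finset.mem_filter.mp h).2.1 hu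
    refine aux_not_connected G (· ∈ S) ?_ (a := u) (b := w) (by simpa using huA)
      (by simpa using hwN) hu hwS
    intro x y hx hy hadj hxS
    by_contra hyS
    exact (by simpa using hy : y ∉ G.extNbhd S)
      (Finset.mem_filter.mpr ⟨Finset.mem_univ y, hyS, x, hxS, hadj⟩)

end Aux

end SimpleGraph

/-- For a graph `G` on `n ≥ 1` vertices with minimum degree `δ`,
`κ(G) = min {|N(S)| : S ⊆ V(G), 1 ≤ |S| ≤ n - δ}`. -/
theorem stmt6 {V : Type*} [Fintype V] [DecidableEq V] [Nonempty V]
    (G : SimpleGraph V) [DecidableRel G.Adj] :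
    G.vertConn = sInf {c | ∃ S : Finset V,
      1 ≤ S.card ∧ S.card ≤ Fintype.card V - G.minDegree ∧ c = (G.extNbhd S).card} := by
  classical
  obtain ⟨v, hv⟩ := G.exists_minimal_degree_vertex
  have hδ : G.minDegree < Fintype.card V := hv ▸ G.degree_lt_card_verts v
  have hNv : G.extNbhd {v} = G.neighborFinset v := by
    ext x
    simp only [SimpleGraph.extNbhd, Finset.mem_filter, Finset.mem_univ, true_and,
      Finset.mem_singleton, SimpleGraph.mem_neighborFinset]
    constructor
    · rintro ⟨-, u, rfl, h⟩; exact h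
    · intro h; exact ⟨fun hx => G.irrefl (hx ▸ h), v, rfl, h⟩
  have hvmem : G.minDegree ∈ {c | ∃ S : Finset V,
      1 ≤ S.card ∧ S.card ≤ Fintype.card V - G.minDegree ∧ c = (G.extNbhd S).card} := by
    refine ⟨{v}, by simp, by simp; omega, ?_⟩
    rw [hNv, SimpleGraph.card_neighborFinset_eq_degree, hv]
  apply le_antisymm
  · -- κ ≤ sInf, via the attained minimum of the RHS
    obtain ⟨S, h1, h2, hc⟩ := Nat.sInf_mem ⟨_, hvmem⟩
    rw [hc]
    exact SimpleGraph.aux_vertConn_le_extNbhd G S h1 h2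
  · -- sInf ≤ κ, via the attained minimum of the LHS
    have hκne : ∃ k, k ∈ {k | ∃ A : Finset V, A.card = k ∧
        ((Aᶜ).card ≤ 1 ∨ ¬ (G.induce ((↑A : Set V)ᶜ)).Connected)} :=
      ⟨Fintype.card V, Finset.univ, Finset.card_univ, Or.inl (by simp)⟩
    obtain ⟨A, hAcard, hAprop⟩ := Nat.sInf_mem hκne
    have hcompl : A.card + (Aᶜ).card = Fintype.card V := by
      rw [Finset.card_compl]
      have := Finset.card_le_univ A
      omega
    by_cases h1 : (Aᶜ).card ≤ 1
    · -- κ = |A| ≥ n - 1 ≥ δ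
      have hAv : A.card = G.vertConn := hAcard
      have : G.minDegree ≤ G.vertConn := by omega
      exact le_trans (Nat.sInf_le hvmem) this
    · have hdisc : ¬ (G.induce ((↑A : Set V)ᶜ)).Connected := hAprop.resolve_left h1
      -- there are two vertices in `Aᶜ` that are not reachable from each other
      obtain ⟨x, hx⟩ := Finset.card_pos.mp (by omega : 0 < (Aᶜ).card)
      have hx' : x ∈ ((↑A : Set V)ᶜ) := by simpa using hx
      have hne : Nonempty ((↑A : Set V)ᶜ : Set V) := ⟨⟨x, hx'⟩⟩
      rw [SimpleGraph.connected_iff] at hdisc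
      push_neg at hdisc
      have hpre : ¬ (G.induce ((↑A : Set V)ᶜ)).Preconnected := fun h => (hdisc h).false hne.some
      rw [SimpleGraph.Preconnected] at hpre
      push_neg at hpre
      obtain ⟨a, b, hab⟩ := hpre
      -- S := vertices of `Aᶜ` reachable from `a`
      set S : Finset V := Finset.univ.filter (fun z =>
        ∃ h : z ∈ ((↑A : Set V)ᶜ), (G.induce ((↑A : Set V)ᶜ)).Reachable a ⟨z, h⟩) with hSdef
      have haS : (a : V) ∈ S := by
        refine Finset.mem_filter.mpr ⟨Finset.mem_univ _, a.2, ?_⟩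
        exact SimpleGraph.Reachable.refl _
      have hreach : ∀ z ∈ S, ∀ y : V, ∀ hy : y ∈ ((↑A : Set V)ᶜ), G.Adj z y →
          (G.induce ((↑A : Set V)ᶜ)).Reachable a ⟨y, hy⟩ := by
        intro z hz y hy hadj
        obtain ⟨-, hz', hr⟩ := Finset.mem_filter.mp hz
        exact hr.trans (SimpleGraph.Adj.reachable (by exact hadj))
      have hbS : (b : V) ∉ S := by
        intro hb
        obtain ⟨-, hb', hr⟩ := Finset.mem_filter.mp hb
        exact hab hr
      have hNS : G.extNbhd S ⊆ A := by
        intro y hy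
        obtain ⟨-, hyS, z, hz, hadj⟩ := Finset.mem_filter.mp hy
        by_contra hyA
        have hy' : y ∈ ((↑A : Set V)ᶜ) := by simpa using hyA
        exact hyS (Finset.mem_filter.mpr ⟨Finset.mem_univ _, hy', hreach z hz y hy' hadj⟩)
      -- `b` and its neighbors avoid `S`, giving the cardinality bound
      have hbnb : ∀ z ∈ S, ¬ G.Adj z (b : V) := by
        intro z hz hadj
        refine hbS (Finset.mem_filter.mpr ⟨Finset.mem_univ _, b.2, ?_⟩)
        exact hreach z hz (b : V) b.2 hadj
      have hdisj2 : Disjoint (insert (b : V) (G.neighborFinset (b : V))) S := by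
        rw [Finset.disjoint_left]
        intro z hz hzS
        rcases Finset.mem_insert.mp hz with rfl | hz'
        · exact hbS hzS
        · exact hbnb z hzS ((SimpleGraph.mem_neighborFinset _ _ _).mp hz').symm
      have hcard2 : G.degree (b : V) + 1 + S.card ≤ Fintype.card V := by
        have h3 := Finset.card_le_univ (insert (b : V) (G.neighborFinset (b : V)) ∪ S)
        rw [Finset.card_union_of_disjoint hdisj2, Finset.card_insert_of_notMem (by simp),
          SimpleGraph.card_neighborFinset_eq_degree] at h3
        omega
      have hδb := G.minDegree_le_degree (b : V)
      have hmem : (G.extNbhd S).card ∈ {c | ∃ S : Finset V,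
          1 ≤ S.card ∧ S.card ≤ Fintype.card V - G.minDegree ∧ c = (G.extNbhd S).card} :=
        ⟨S, Finset.card_pos.mpr ⟨a, haS⟩, by omega, rfl⟩
      calc sInf _ ≤ (G.extNbhd S).card := Nat.sInf_le hmem
        _ ≤ A.card := Finset.card_le_card hNS
        _ = G.vertConn := hAcard
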